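/- Let p > 2 be a prime, ξ a primitive element of F_p, and let f be the unique polynomial over F_p of degree at most p−1 with f(0) = 0 and f(ξ^i) = i+1 for i = 0, 1, …, p−2. Let α, β, γ, δ ∈ F_p with αδ ≠ βγ and γ ≠ 0, and let N be the number of c ∈ F_p with γc + δ ≠ 0 and f(c) = (αc + β)/(γc + δ). Then (N − 1)^2 ≤ 4(p−2). -/

import Mathlib

open Polynomial Finset

/-- The Carlitz composition `P_n` over a field with `q` elements, built from
the constants `c 0, c 1, …, c (n+1)`:
`P_n(x) = (⋯((c_0 x + c_1)^{q-2} + c_2)^{q-2} ⋯ + c_n)^{q-2} + c_{n+1}`. -/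
def carlitzAux {F : Type*} [Field F] (q : ℕ) (c : ℕ → F) : ℕ → F → F
  | 0 => fun x => c 0 * x + c 1
  | n + 1 => fun x => (carlitzAux q c n x) ^ (q - 2) + c (n + 2)

/-- `f` agrees (as a map) with a Carlitz composition `P_n` with `n` inversions,
where `c 0 ≠ 0` and `c i ≠ 0` for `2 ≤ i ≤ n`. -/
def IsCarlitzForm {F : Type*} [Field F] [Fintype F] (f : F → F) (n : ℕ) : Prop :=
  ∃ c : ℕ → F, c 0 ≠ 0 ∧ (∀ i, 2 ≤ i → i ≤ n → c i ≠ 0) ∧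
    ∀ x, f x = carlitzAux (Fintype.card F) c n x

/-- The Carlitz rank of a map `f`: the smallest `n` such that `f` agrees with a
Carlitz composition `P_n`. -/
noncomputable def carlitzRank {F : Type*} [Field F] [Fintype F] (f : F → F) : ℕ :=
  sInf {n | IsCarlitzForm f n}

/-- `f` is the `r`-th order cyclotomic mapping of index `ℓ` with respect to the
primitive element `ξ` and coefficients `a 0, …, a (ℓ-1)`: it maps `0` to `0` and
`x` to `a i * x ^ r` for `x` in the cyclotomic coset `C_i = ξ^i C_0`, where
`C_0` is the set of nonzero `ℓ`-th powers. -/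
def IsCycMap {F : Type*} [Field F] (ℓ r : ℕ) (ξ : F) (a : ℕ → F) (f : F → F) : Prop :=
  f 0 = 0 ∧ (∀ i < ℓ, a i ≠ 0) ∧
    ∀ i < ℓ, ∀ y : F, y ≠ 0 → f (ξ ^ i * y ^ ℓ) = a i * (ξ ^ i * y ^ ℓ) ^ r

/-- The index `Ind(f)` of a map `f` with `f 0 = 0`: the smallest divisor `ℓ` of
`q - 1` such that `f` is an `r`-th order cyclotomic mapping of index `ℓ` for some
positive `r`, some primitive element `ξ` and some nonzero coefficients. -/
noncomputable def cycIndex {F : Type*} [Field F] [Fintype F] (f : F → F) : ℕ :=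
  sInf {ℓ | ℓ ∣ Fintype.card F - 1 ∧ ∃ r, 1 ≤ r ∧ ∃ ξ : F,
    orderOf ξ = Fintype.card F - 1 ∧ ∃ a : ℕ → F, IsCycMap ℓ r ξ a f}

/-- The linearity `L(f) = max_{a ≠ 0} |{c : f c = a c}|`. -/
def linearity {F : Type*} [Field F] [Fintype F] [DecidableEq F] (f : F → F) : ℕ :=
  (Finset.univ.erase (0 : F)).sup
    (fun a => (Finset.univ.filter (fun c => f c = a * c)).card)

/-- The invertibility `I(f) = max_{c ≠ 0} |{x ≠ 0 : f x = c / x}|`. -/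
def invertibility {F : Type*} [Field F] [Fintype F] [DecidableEq F] (f : F → F) : ℕ :=
  (Finset.univ.erase (0 : F)).sup
    (fun c => ((Finset.univ.erase (0 : F)).filter (fun x => f x = c / x)).card)


section Aux
variable {p : ℕ} [Fact p.Prime]

private lemma stmt16_cast_inj {a b : ℕ} (ha : a < p) (hb : b < p)
    (h : (a : ZMod p) = (b : ZMod p)) : a = b := by
  have h1 := ZMod.val_cast_of_lt ha
  have h2 := ZMod.val_cast_of_lt hb
  rw [← h1, ← h2, h]

/-- Key algebraic lemma: two pairs at a nondegenerate sum-slot coincide. -/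
private lemma stmt16_key {ξ α β γ δ : ZMod p} (hdet : α * δ ≠ β * γ) (hξ : ξ ≠ 0)
    {σ t u v w : ℕ}
    (hbad : ¬(ξ ^ σ * γ ^ 2 = ξ ^ 2 * δ ^ 2 ∧ γ * δ * (σ : ZMod p) = β * γ + α * δ))
    (htu : t + u = σ) (hvw : v + w = σ)
    (htp : t < p) (hup : u < p) (hvp : v < p)
    (Et : ξ ^ t * (γ * (t : ZMod p) - α) = ξ * (β - δ * (t : ZMod p)))
    (Eu : ξ ^ u * (γ * (u : ZMod p) - α) = ξ * (β - δ * (u : ZMod p)))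
    (Ev : ξ ^ v * (γ * (v : ZMod p) - α) = ξ * (β - δ * (v : ZMod p)))
    (Ew : ξ ^ w * (γ * (w : ZMod p) - α) = ξ * (β - δ * (w : ZMod p))) :
    t = v ∨ v = u := by
  have hp1 : 1 < p := (Fact.out : p.Prime).one_lt
  have hcu : (t : ZMod p) + (u : ZMod p) = (σ : ZMod p) := by
    have := congrArg (fun k : ℕ => (k : ZMod p)) htu
    push_cast at this; exact this
  have hcv : (v : ZMod p) + (w : ZMod p) = (σ : ZMod p) := by
    have := congrArg (fun k : ℕ => (k : ZMod p)) hvw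
    push_cast at this; exact this
  have hxtu : ξ ^ t * ξ ^ u = ξ ^ σ := by rw [← pow_add, htu]
  have hxvw : ξ ^ v * ξ ^ w = ξ ^ σ := by rw [← pow_add, hvw]
  have Ht : ξ ^ σ * ((γ * (t : ZMod p) - α) * (γ * (u : ZMod p) - α))
      = ξ ^ 2 * ((β - δ * (t : ZMod p)) * (β - δ * (u : ZMod p))) := by
    linear_combination (ξ ^ u * (γ * (u : ZMod p) - α)) * Et
      + (ξ * (β - δ * (t : ZMod p))) * Eu
      - ((γ * (t : ZMod p) - α) * (γ * (u : ZMod p) - α)) * hxtu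
  have Hv : ξ ^ σ * ((γ * (v : ZMod p) - α) * (γ * (w : ZMod p) - α))
      = ξ ^ 2 * ((β - δ * (v : ZMod p)) * (β - δ * (w : ZMod p))) := by
    linear_combination (ξ ^ w * (γ * (w : ZMod p) - α)) * Ev
      + (ξ * (β - δ * (v : ZMod p))) * Ew
      - ((γ * (v : ZMod p) - α) * (γ * (w : ZMod p) - α)) * hxvw
  set T : ZMod p := (t : ZMod p)
  set U : ZMod p := (u : ZMod p)
  set V : ZMod p := (v : ZMod p)
  set W' : ZMod p := (w : ZMod p)
  set Sg : ZMod p := (σ : ZMod p)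
  have K : (ξ ^ σ * γ ^ 2 - ξ ^ 2 * δ ^ 2) * ((T - V) * (T + V - Sg)) = 0 := by
    linear_combination (-1 : ZMod p) * Ht + Hv
      + (ξ ^ σ * γ * (γ * T - α) + ξ ^ 2 * δ * (β - δ * T)) * hcu
      - (ξ ^ σ * γ * (γ * V - α) + ξ ^ 2 * δ * (β - δ * V)) * hcv
  rcases mul_eq_zero.mp K with ha | hK
  · -- degenerate: derive Bad σ, contradiction
    exfalso
    have b1 : ξ ^ σ * γ ^ 2 = ξ ^ 2 * δ ^ 2 := by linear_combination ha
    have h6 : ξ ^ 2 * ((α * δ - β * γ) * (α * δ + β * γ - γ * δ * Sg)) = 0 := by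
      linear_combination (γ ^ 2) * Ht
        - (γ ^ 2 * (ξ ^ σ * γ * (γ * T - α) + ξ ^ 2 * δ * (β - δ * T))) * hcu
        + (γ ^ 2 * (T ^ 2 - Sg * T) - α ^ 2 + α * γ * Sg) * ha
    have hξ2 : (ξ : ZMod p) ^ 2 ≠ 0 := pow_ne_zero 2 hξ
    rcases mul_eq_zero.mp h6 with h | h
    · exact hξ2 h
    rcases mul_eq_zero.mp h with h | h
    · exact hdet (by linear_combination h)
    · exact hbad ⟨b1, by linear_combination -h⟩
  · rcases mul_eq_zero.mp hK with h | h
    · left; exact stmt16_cast_inj htp hvp (by linear_combination h)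
    · right
      have : V = U := by linear_combination h - hcu
      exact stmt16_cast_inj hvp hup this

end Aux

section Aux2
variable {p : ℕ} [Fact p.Prime]

/-- In the degenerate (bad) slot case with β = 0, slots σ ± (p-1) are empty. -/
private lemma stmt16_thin {ξ α β γ δ : ZMod p} (hdet : α * δ ≠ β * γ) (hγ : γ ≠ 0)
    (hδ : δ ≠ 0) (hβ : β = 0) (hξ : ξ ≠ 0) {σ t u : ℕ}
    (hBad1 : ξ ^ σ * γ ^ 2 = ξ ^ 2 * δ ^ 2)
    (hBad2 : γ * δ * (σ : ZMod p) = β * γ + α * δ)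
    (Et : ξ ^ t * (γ * (t : ZMod p) - α) = ξ * (β - δ * (t : ZMod p)))
    (Eu : ξ ^ u * (γ * (u : ZMod p) - α) = ξ * (β - δ * (u : ZMod p)))
    (hnet : γ * (t : ZMod p) - α ≠ 0)
    (hpow : ξ ^ t * ξ ^ u = ξ ^ σ) {e : ZMod p} (he : e ≠ 0)
    (hcast : (t : ZMod p) + (u : ZMod p) = (σ : ZMod p) + e) : False := by
  subst hβ
  set T : ZMod p := (t : ZMod p)
  set U : ZMod p := (u : ZMod p)
  set Sg : ZMod p := (σ : ZMod p)
  have hσα : γ * Sg = α := by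
    have : (γ * Sg) * δ = α * δ := by linear_combination hBad2
    exact mul_right_cancel₀ hδ this
  have hγ2 : γ ^ 2 ≠ 0 := pow_ne_zero 2 hγ
  -- pointwise badness identity at T
  have hBt : ξ ^ σ * ((γ * T - α) * (γ * (Sg - T) - α))
      = ξ ^ 2 * ((0 - δ * T) * (0 - δ * (Sg - T))) := by
    apply mul_left_cancel₀ hγ2
    linear_combination ((γ * T - α) * (γ * (Sg - T) - α)) * hBad1
      - (ξ ^ 2 * (α * δ - 0 * γ)) * hBad2
  -- cancel (γT - α)
  have h3 : ξ ^ σ * (γ * (Sg - T) - α) = ξ ^ t * (ξ * (0 - δ * (Sg - T))) := by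
    apply mul_left_cancel₀ hnet
    linear_combination hBt + (ξ * (δ * (Sg - T))) * Et
  have h4 : ξ ^ σ * (γ * U - α) = ξ ^ t * (ξ * (0 - δ * U)) := by
    linear_combination (ξ ^ t) * Eu - (γ * U - α) * hpow
  have hU : U = Sg + e - T := by linear_combination hcast
  have h5e : (ξ ^ σ * γ + ξ ^ t * (ξ * δ)) * e = 0 := by
    linear_combination -h3 + h4 - (ξ ^ σ * γ + ξ ^ t * (ξ * δ)) * hU
  have h5 : ξ ^ σ * γ + ξ ^ t * (ξ * δ) = 0 := by
    rcases mul_eq_zero.mp h5e with h | h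
    · exact h
    · exact absurd h he
  -- final contradiction: Sg = 0
  have hfin : (ξ ^ t * (ξ * δ)) * Sg = 0 := by
    linear_combination h3 - (ξ ^ σ) * hσα + T * h5
  have hSg : Sg = 0 := by
    have h1 : ξ ^ t * (ξ * δ) ≠ 0 :=
      mul_ne_zero (pow_ne_zero t hξ) (mul_ne_zero hξ hδ)
    rcases mul_eq_zero.mp hfin with h | h
    · exact absurd h h1
    · exact h
  have hα0 : α = 0 := by rw [← hσα, hSg, mul_zero]
  exact hdet (by rw [hα0, zero_mul, zero_mul])

end Aux2

section Aux3
variable {p : ℕ} [Fact p.Prime]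

private lemma stmt16_pow_modEq {ξ : ZMod p} (hξ0 : ξ ≠ 0) {i j : ℕ}
    (h : ξ ^ i = ξ ^ j) : i ≡ j [MOD orderOf ξ] := by
  set u : (ZMod p)ˣ := Units.mk0 ξ hξ0 with hu
  have hval : (u : ZMod p) = ξ := rfl
  have hpow : u ^ i = u ^ j := by
    apply Units.ext
    simpa [hval] using h
  have := pow_eq_pow_iff_modEq.mp hpow
  rwa [← orderOf_units, hval] at this

private lemma stmt16_xi_ne_zero {ξ : ZMod p} (hp : 2 < p) (hξ : orderOf ξ = p - 1) :
    ξ ≠ 0 := by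
  intro h0
  have h1 : ξ ^ (p - 1) = 1 := by rw [← hξ]; exact pow_orderOf_eq_one ξ
  rw [h0, zero_pow (by omega : p - 1 ≠ 0)] at h1
  exact zero_ne_one h1

private lemma stmt16_exists_pow {ξ : ZMod p} (hp : 2 < p) (hξ : orderOf ξ = p - 1)
    {c : ZMod p} (hc : c ≠ 0) : ∃ i, i < p - 1 ∧ ξ ^ i = c := by
  have hξ0 : ξ ≠ 0 := stmt16_xi_ne_zero hp hξ
  have hinj : Set.InjOn (fun i => ξ ^ i) ↑(Finset.range (p - 1)) := by
    intro i hi j hj hij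
    simp only [Finset.coe_range, Set.mem_Iio] at hi hj
    have h2 := stmt16_pow_modEq hξ0 hij
    rw [hξ] at h2
    have : i % (p - 1) = j % (p - 1) := h2
    rwa [Nat.mod_eq_of_lt hi, Nat.mod_eq_of_lt hj] at this
  have hsub : (Finset.range (p - 1)).image (fun i => ξ ^ i)
      ⊆ Finset.univ.filter (fun c : ZMod p => c ≠ 0) := by
    intro x hx
    simp only [Finset.mem_image] at hx
    obtain ⟨i, _, rfl⟩ := hx
    simp [pow_ne_zero i hξ0]
  have hcard1 : ((Finset.range (p - 1)).image (fun i => ξ ^ i)).card = p - 1 := by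
    rw [Finset.card_image_of_injOn hinj, Finset.card_range]
  have hcard2 : (Finset.univ.filter (fun c : ZMod p => c ≠ 0)).card = p - 1 := by
    rw [Finset.filter_ne']
    rw [Finset.card_erase_of_mem (Finset.mem_univ 0), Finset.card_univ, ZMod.card]
  have heq : (Finset.range (p - 1)).image (fun i => ξ ^ i)
      = Finset.univ.filter (fun c : ZMod p => c ≠ 0) :=
    Finset.eq_of_subset_of_card_le hsub (by omega)
  have : c ∈ (Finset.range (p - 1)).image (fun i => ξ ^ i) := by
    rw [heq]; simp [hc]
  simp only [Finset.mem_image, Finset.mem_range] at this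
  obtain ⟨i, hi, hix⟩ := this
  exact ⟨i, hi, hix⟩

private lemma stmt16_bad_unique {ξ γ δ : ZMod p} (hp : 2 < p) (hξ : orderOf ξ = p - 1)
    (hγ : γ ≠ 0) {σ σ' : ℕ}
    (hσ : 2 ≤ σ ∧ σ ≤ 2 * p - 2) (hσ' : 2 ≤ σ' ∧ σ' ≤ 2 * p - 2)
    (h1 : ξ ^ σ * γ ^ 2 = ξ ^ 2 * δ ^ 2) (h1' : ξ ^ σ' * γ ^ 2 = ξ ^ 2 * δ ^ 2)
    (h2 : (σ : ZMod p) = (σ' : ZMod p)) : σ = σ' := by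
  have hξ0 : ξ ≠ 0 := stmt16_xi_ne_zero hp hξ
  have hγ2 : γ ^ 2 ≠ 0 := pow_ne_zero 2 hγ
  have hpow : ξ ^ σ = ξ ^ σ' := by
    have := h1.trans h1'.symm
    exact mul_right_cancel₀ hγ2 this
  have hmod1 : σ ≡ σ' [MOD p - 1] := by
    have := stmt16_pow_modEq hξ0 hpow
    rwa [hξ] at this
  have hmod2 : σ ≡ σ' [MOD p] := (ZMod.natCast_eq_natCast_iff σ σ' p).mp h2
  have hcop : Nat.Coprime (p - 1) p := by
    have h : p - 1 + 1 = p := by omega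
    rw [← h]
    have := Nat.coprime_self_add_left (m := p - 1) (n := 1)
    simpa using this.mpr (Nat.coprime_one_left _)
  rcases Nat.le_total σ σ' with hle | hle
  · have d1 : (p - 1) ∣ σ' - σ := (Nat.modEq_iff_dvd' hle).mp hmod1
    have d2 : p ∣ σ' - σ := (Nat.modEq_iff_dvd' hle).mp hmod2
    have d3 : (p - 1) * p ∣ σ' - σ := hcop.mul_dvd_of_dvd_of_dvd d1 d2
    rcases Nat.eq_zero_or_pos (σ' - σ) with h | h
    · omega
    · exfalso
      have hA : 2 * p ≤ (p - 1) * p := Nat.mul_le_mul_right p (by omega)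
      have h5 : 2 * p ≤ σ' - σ := le_trans hA (Nat.le_of_dvd h d3)
      omega
  · have d1 : (p - 1) ∣ σ - σ' := (Nat.modEq_iff_dvd' hle).mp hmod1.symm
    have d2 : p ∣ σ - σ' := (Nat.modEq_iff_dvd' hle).mp hmod2.symm
    have d3 : (p - 1) * p ∣ σ - σ' := hcop.mul_dvd_of_dvd_of_dvd d1 d2
    rcases Nat.eq_zero_or_pos (σ - σ') with h | h
    · omega
    · exfalso
      have hA : 2 * p ≤ (p - 1) * p := Nat.mul_le_mul_right p (by omega)
      have h5 : 2 * p ≤ σ - σ' := le_trans hA (Nat.le_of_dvd h d3)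
      omega

end Aux3

/-- For the discrete logarithm polynomial `f` over `F_p` (`p > 2` prime)
and `α, β, γ, δ ∈ F_p` with `αδ ≠ βγ` and `γ ≠ 0`, the number `N` of `c ∈ F_p` with
`γc+δ ≠ 0` and `f(c) = (αc+β)/(γc+δ)` satisfies `(N−1)^2 ≤ 4(p−2)`. -/
theorem stmt16 {p : ℕ} [Fact p.Prime] (hp : 2 < p) (ξ : ZMod p)
    (hξ : orderOf ξ = p - 1) (f : Polynomial (ZMod p))
    (hdeg : f.degree ≤ ((p - 1 : ℕ) : WithBot ℕ)) (h0 : f.eval 0 = 0)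
    (hval : ∀ i : ℕ, i ≤ p - 2 → f.eval (ξ ^ i) = (i : ZMod p) + 1)
    (α β γ δ : ZMod p) (hdet : α * δ ≠ β * γ) (hγ : γ ≠ 0) :
    (((Finset.univ.filter
      (fun c : ZMod p => γ * c + δ ≠ 0 ∧ f.eval c = (α * c + β) / (γ * c + δ))).card : ℤ) - 1) ^ 2
      ≤ 4 * ((p : ℤ) - 2) := by
  have hξ0 : ξ ≠ 0 := stmt16_xi_ne_zero hp hξ
  have hξp1 : ξ ^ (p - 1) = 1 := by rw [← hξ]; exact pow_orderOf_eq_one ξ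
  set S0 := Finset.univ.filter
      (fun c : ZMod p => γ * c + δ ≠ 0 ∧ f.eval c = (α * c + β) / (γ * c + δ)) with hS0
  set T : Finset ℕ := (Finset.Ico 1 p).filter
      (fun t => γ * ξ ^ (t - 1) + δ ≠ 0 ∧
        f.eval (ξ ^ (t - 1)) = (α * ξ ^ (t - 1) + β) / (γ * ξ ^ (t - 1) + δ)) with hT
  set n := T.card with hn
  -- evaluation at powers
  have heval : ∀ t : ℕ, 1 ≤ t → t < p → f.eval (ξ ^ (t - 1)) = (t : ZMod p) := by
    intro t h1 h2
    rw [hval (t - 1) (by omega)]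
    rw [Nat.cast_sub h1]
    push_cast
    ring
  -- basic membership facts for T
  have hTmem : ∀ t ∈ T, 1 ≤ t ∧ t < p := by
    intro t ht
    rw [hT, Finset.mem_filter, Finset.mem_Ico] at ht
    exact ⟨ht.1.1, ht.1.2⟩
  -- the fundamental equation E
  have hE : ∀ t ∈ T, ξ ^ t * (γ * (t : ZMod p) - α) = ξ * (β - δ * (t : ZMod p))
      ∧ γ * (t : ZMod p) - α ≠ 0 := by
    intro t ht
    obtain ⟨h1, h2⟩ := hTmem t ht
    rw [hT, Finset.mem_filter] at ht
    obtain ⟨-, hden, hev⟩ := ht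
    have hev' : (t : ZMod p) = (α * ξ ^ (t - 1) + β) / (γ * ξ ^ (t - 1) + δ) :=
      (heval t h1 h2).symm.trans hev
    have hcross : (t : ZMod p) * (γ * ξ ^ (t - 1) + δ) = α * ξ ^ (t - 1) + β :=
      (eq_div_iff hden).mp hev'
    have hc : ξ ^ (t - 1) * (γ * (t : ZMod p) - α) = β - δ * (t : ZMod p) := by
      linear_combination hcross
    have hne : γ * (t : ZMod p) - α ≠ 0 := by
      intro hzero
      have hb : β - δ * (t : ZMod p) = 0 := by rw [← hc, hzero, mul_zero]
      exact hdet (by linear_combination (-δ) * hzero - γ * hb)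
    have hxi : ξ ^ t = ξ ^ (t - 1) * ξ := by
      conv_lhs => rw [show t = (t - 1) + 1 by omega]
      rw [pow_succ]
    exact ⟨by linear_combination ξ * hc + (γ * (t : ZMod p) - α) * hxi, hne⟩
  -- bijection between T and nonzero solutions
  have hbij : n = (S0.erase 0).card := by
    rw [hn]
    apply Finset.card_bij (fun t _ => ξ ^ (t - 1))
    · intro t ht
      obtain ⟨h1, h2⟩ := hTmem t ht
      rw [hT, Finset.mem_filter] at ht
      rw [Finset.mem_erase, hS0, Finset.mem_filter]
      exact ⟨pow_ne_zero _ hξ0, Finset.mem_univ _, ht.2⟩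
    · intro t ht u hu hpow
      obtain ⟨ht1, ht2⟩ := hTmem t ht
      obtain ⟨hu1, hu2⟩ := hTmem u hu
      have := stmt16_pow_modEq hξ0 hpow
      rw [hξ] at this
      have h' : (t - 1) % (p - 1) = (u - 1) % (p - 1) := this
      rw [Nat.mod_eq_of_lt (by omega), Nat.mod_eq_of_lt (by omega)] at h'
      omega
    · intro c hc
      rw [Finset.mem_erase] at hc
      obtain ⟨i, hi, hic⟩ := stmt16_exists_pow hp hξ hc.1
      refine ⟨i + 1, ?_, by simpa using hic⟩
      rw [hT, Finset.mem_filter, Finset.mem_Ico]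
      have hc2 := hc.2
      rw [hS0, Finset.mem_filter] at hc2
      constructor
      · omega
      · simpa [hic] using hc2.2
  -- membership of 0
  have h0mem : (0 : ZMod p) ∈ S0 ↔ (δ ≠ 0 ∧ β = 0) := by
    rw [hS0, Finset.mem_filter]
    simp only [Finset.mem_univ, true_and, mul_zero, zero_add, h0]
    constructor
    · rintro ⟨hδ, hq⟩
      refine ⟨hδ, ?_⟩
      rcases div_eq_zero_iff.mp hq.symm with h | h
      · exact h
      · exact absurd h hδ
    · rintro ⟨hδ, hβ⟩
      exact ⟨hδ, by rw [hβ, zero_div]⟩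
  -- pairs machinery
  set D : Finset (ℕ × ℕ) := T ×ˢ T with hD
  set SP : Finset (ℕ × ℕ) := D.filter (fun q => q.1 ≤ q.2) with hSP
  set g : ℕ → ℕ := fun σ => (SP.filter (fun q => q.1 + q.2 = σ)).card with hg
  set W : Finset ℕ := Finset.Icc 2 (2 * p - 2) with hW
  have hWcard : W.card = 2 * p - 3 := by rw [hW, Nat.card_Icc]; omega
  have hSPmem : ∀ q ∈ SP, q.1 ∈ T ∧ q.2 ∈ T ∧ q.1 ≤ q.2 := by
    intro q hq
    rw [hSP, Finset.mem_filter, hD, Finset.mem_product] at hq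
    exact ⟨hq.1.1, hq.1.2, hq.2⟩
  have hfiber : SP.card = ∑ σ ∈ W, g σ := by
    apply Finset.card_eq_sum_card_fiberwise
    intro q hq
    obtain ⟨hq1, hq2, -⟩ := hSPmem q hq
    obtain ⟨h11, h12⟩ := hTmem _ hq1
    obtain ⟨h21, h22⟩ := hTmem _ hq2
    simp only [hW, Finset.coe_Icc, Set.mem_Icc]
    omega
  -- 2 * SP.card = n^2 + n
  have h2U : 2 * SP.card = n * n + n := by
    have hcomp : SP.card + (D.filter (fun q => ¬ q.1 ≤ q.2)).card = D.card :=
      Finset.card_filter_add_card_filter_not _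
    have hgt : D.filter (fun q => ¬ q.1 ≤ q.2) = D.filter (fun q => q.2 < q.1) := by
      apply Finset.filter_congr
      intro q _
      simp [Nat.not_le]
    have hswap : (D.filter (fun q => q.2 < q.1)).card
        = (D.filter (fun q => q.1 < q.2)).card := by
      apply Finset.card_bij (fun q (_ : q ∈ D.filter (fun q => q.2 < q.1)) => (q.2, q.1))
      · intro q hq
        rw [Finset.mem_filter, hD, Finset.mem_product] at hq ⊢
        exact ⟨⟨hq.1.2, hq.1.1⟩, hq.2⟩
      · intro q hq r hr h
        rw [Prod.ext_iff] at h ⊢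
        exact ⟨h.2, h.1⟩
      · intro r hr
        refine ⟨(r.2, r.1), ?_, rfl⟩
        rw [Finset.mem_filter, hD, Finset.mem_product] at hr ⊢
        exact ⟨⟨hr.1.2, hr.1.1⟩, hr.2⟩
    have hsplit : SP = (D.filter (fun q => q.1 < q.2)) ∪ (D.filter (fun q => q.1 = q.2)) := by
      rw [hSP, ← Finset.filter_or]
      apply Finset.filter_congr
      intro q _
      simp [Nat.le_iff_lt_or_eq]
    have hdisj : Disjoint (D.filter (fun q => q.1 < q.2)) (D.filter (fun q => q.1 = q.2)) := by
      rw [Finset.disjoint_left]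
      intro q hq1 hq2
      rw [Finset.mem_filter] at hq1 hq2
      omega
    have hdiag : (D.filter (fun q => q.1 = q.2)).card = n := by
      rw [hn]
      apply Finset.card_bij (fun q (_ : q ∈ D.filter (fun q => q.1 = q.2)) => q.1)
      · intro q hq
        rw [Finset.mem_filter, hD, Finset.mem_product] at hq
        exact hq.1.1
      · intro q hq r hr h
        rw [Finset.mem_filter] at hq hr
        exact Prod.ext h (by omega)
      · intro t ht
        refine ⟨(t, t), ?_, rfl⟩
        rw [Finset.mem_filter, hD, Finset.mem_product]
        exact ⟨⟨ht, ht⟩, rfl⟩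
    have hDcard : D.card = n * n := by rw [hD, Finset.card_product, hn]
    have hucard : SP.card = (D.filter (fun q => q.1 < q.2)).card + n := by
      rw [hsplit, Finset.card_union_of_disjoint hdisj, hdiag]
    rw [hgt, hswap] at hcomp
    omega
  -- generic slot capacity
  have hcap : ∀ σ : ℕ,
      ¬(ξ ^ σ * γ ^ 2 = ξ ^ 2 * δ ^ 2 ∧ γ * δ * (σ : ZMod p) = β * γ + α * δ) →
      g σ ≤ 1 := by
    intro σ hbad
    rw [hg]
    apply Finset.card_le_one.mpr
    intro q hq r hr
    rw [Finset.mem_filter] at hq hr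
    obtain ⟨hq1, hq2, hq3⟩ := hSPmem q hq.1
    obtain ⟨hr1, hr2, hr3⟩ := hSPmem r hr.1
    obtain ⟨hq11, hq12⟩ := hTmem _ hq1
    obtain ⟨hq21, hq22⟩ := hTmem _ hq2
    obtain ⟨hr11, hr12⟩ := hTmem _ hr1
    obtain ⟨hr21, hr22⟩ := hTmem _ hr2
    have hkey := stmt16_key hdet hξ0 hbad hq.2 hr.2 hq12 hq22 hr12
      (hE _ hq1).1 (hE _ hq2).1 (hE _ hr1).1 (hE _ hr2).1
    have : q.1 = r.1 ∧ q.2 = r.2 := by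
      rcases hkey with h | h
      · constructor <;> omega
      · constructor <;> omega
    exact Prod.ext this.1 this.2
  -- universal slot bound: 2 * g σ ≤ n + 1
  have hm : ∀ σ : ℕ, 2 * g σ ≤ n + 1 := by
    intro σ
    set s : Finset (ℕ × ℕ) := SP.filter (fun q => q.1 + q.2 = σ) with hs
    have hsmem : ∀ q ∈ s, q.1 ∈ T ∧ q.2 ∈ T ∧ q.1 ≤ q.2 ∧ q.1 + q.2 = σ := by
      intro q hq
      rw [hs, Finset.mem_filter] at hq
      obtain ⟨h1, h2, h3⟩ := hSPmem q hq.1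
      exact ⟨h1, h2, h3, hq.2⟩
    have hi1 : (s.image Prod.fst).card = s.card := by
      apply Finset.card_image_of_injOn
      intro q hq r hr h
      obtain ⟨-, -, -, hq4⟩ := hsmem q hq
      obtain ⟨-, -, -, hr4⟩ := hsmem r hr
      have : q.2 = r.2 := by omega
      exact Prod.ext h this
    have hi2 : (s.image Prod.snd).card = s.card := by
      apply Finset.card_image_of_injOn
      intro q hq r hr h
      obtain ⟨-, -, -, hq4⟩ := hsmem q hq
      obtain ⟨-, -, -, hr4⟩ := hsmem r hr
      have : q.1 = r.1 := by omega
      exact Prod.ext this h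
    have hsub : (s.image Prod.fst) ∪ (s.image Prod.snd) ⊆ T := by
      intro x hx
      rcases Finset.mem_union.mp hx with h | h
      · obtain ⟨q, hq, rfl⟩ := Finset.mem_image.mp h
        exact (hsmem q hq).1
      · obtain ⟨q, hq, rfl⟩ := Finset.mem_image.mp h
        exact (hsmem q hq).2.1
    have hint : ((s.image Prod.fst) ∩ (s.image Prod.snd)).card ≤ 1 := by
      apply Finset.card_le_one.mpr
      intro x hx y hy
      rw [Finset.mem_inter] at hx hy
      obtain ⟨q, hq, hq'⟩ := Finset.mem_image.mp hx.1
      obtain ⟨r, hr, hr'⟩ := Finset.mem_image.mp hx.2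
      obtain ⟨q2, hq2, hq2'⟩ := Finset.mem_image.mp hy.1
      obtain ⟨r2, hr2, hr2'⟩ := Finset.mem_image.mp hy.2
      obtain ⟨-, -, hqle, hqs⟩ := hsmem q hq
      obtain ⟨-, -, hrle, hrs⟩ := hsmem r hr
      obtain ⟨-, -, hq2le, hq2s⟩ := hsmem q2 hq2
      obtain ⟨-, -, hr2le, hr2s⟩ := hsmem r2 hr2
      omega
    have hunion := Finset.card_union_add_card_inter (s.image Prod.fst) (s.image Prod.snd)
    have hle : ((s.image Prod.fst) ∪ (s.image Prod.snd)).card ≤ n :=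
      le_trans (Finset.card_le_card hsub) (le_of_eq hn.symm)
    have hgσ : g σ = s.card := rfl
    omega
  -- abstract n * n for omega
  obtain ⟨m2, hm2⟩ : ∃ m2, m2 = n * n := ⟨n * n, rfl⟩
  rw [← hm2] at h2U
  have hp3 : (3 : ℤ) ≤ (p : ℤ) := by exact_mod_cast hp
  have hm2c : (m2 : ℤ) = (n : ℤ) * (n : ℤ) := by exact_mod_cast hm2
  -- case: does a bad slot exist in the window?
  by_cases hbadex : ∃ σ ∈ W,
      ξ ^ σ * γ ^ 2 = ξ ^ 2 * δ ^ 2 ∧ γ * δ * (σ : ZMod p) = β * γ + α * δ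
  · -- bad slot exists
    obtain ⟨σs, hσsW, hB1, hB2⟩ := hbadex
    have hσsW' : 2 ≤ σs ∧ σs ≤ 2 * p - 2 := by
      rw [hW, Finset.mem_Icc] at hσsW; exact hσsW
    have hσsWmem : σs ∈ W := by rw [hW, Finset.mem_Icc]; exact hσsW'
    have hδ0 : δ ≠ 0 := by
      intro h
      rw [h] at hB1
      have hz' : ξ ^ σs * γ ^ 2 = 0 := by rw [hB1]; ring
      exact (mul_ne_zero (pow_ne_zero _ hξ0) (pow_ne_zero 2 hγ)) hz'
    have hothers : ∀ σ ∈ W.erase σs, g σ ≤ 1 := by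
      intro σ hσ
      rw [Finset.mem_erase] at hσ
      apply hcap
      rintro ⟨h1, h2⟩
      apply hσ.1
      have hσW' : 2 ≤ σ ∧ σ ≤ 2 * p - 2 := by
        have := hσ.2; rw [hW, Finset.mem_Icc] at this; exact this
      apply stmt16_bad_unique hp hξ hγ hσW' hσsW' h1 hB1
      have hγδ : γ * δ ≠ 0 := mul_ne_zero hγ hδ0
      exact mul_left_cancel₀ hγδ (by linear_combination h2 - hB2)
    have hsum : SP.card = g σs + ∑ σ ∈ W.erase σs, g σ := by
      rw [hfiber]
      exact (Finset.add_sum_erase W g hσsWmem).symm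
    have hgs : 2 * g σs ≤ n + 1 := hm σs
    by_cases hz : (0 : ZMod p) ∈ S0
    · -- z = 1 : zero is a solution, need the thin slot
      obtain ⟨hδ', hβ0⟩ := h0mem.mp hz
      have hσsp : (σs : ZMod p) ≠ 0 := by
        intro h
        apply hdet
        rw [hβ0, zero_mul]
        linear_combination -hB2 + γ * δ * h - γ * hβ0
      have hσsnp : σs ≠ p := by
        intro h
        apply hσsp
        rw [h]
        exact_mod_cast ZMod.natCast_self p
      set σth := if σs < p then σs + (p - 1) else σs - (p - 1) with hσth
      have hσthW : σth ∈ W := by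
        rw [hW, Finset.mem_Icc, hσth]; split <;> omega
      have hσthne : σth ≠ σs := by rw [hσth]; split <;> omega
      have hcastp : ((p - 1 : ℕ) : ZMod p) = -1 := by
        rw [Nat.cast_sub (by omega : 1 ≤ p), ZMod.natCast_self]
        push_cast
        ring
      have hthin : g σth = 0 := by
        have : (SP.filter (fun q => q.1 + q.2 = σth)) = ∅ := by
          rw [Finset.filter_eq_empty_iff]
          intro q hq hqsum
          obtain ⟨hq1, hq2, -⟩ := hSPmem q hq
          obtain ⟨h11, h12⟩ := hTmem _ hq1
          obtain ⟨h21, h22⟩ := hTmem _ hq2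
          obtain ⟨Et, hnet⟩ := hE _ hq1
          obtain ⟨Eu, -⟩ := hE _ hq2
          by_cases hlt : σs < p
          · have hsum2 : q.1 + q.2 = σs + (p - 1) := by
              rw [hσth, if_pos hlt] at hqsum; exact hqsum
            have hpow : ξ ^ q.1 * ξ ^ q.2 = ξ ^ σs := by
              rw [← pow_add, hsum2, pow_add, hξp1, mul_one]
            have hcast : (q.1 : ZMod p) + (q.2 : ZMod p) = (σs : ZMod p) + (-1) := by
              have h' := congrArg (fun k : ℕ => (k : ZMod p)) hsum2
              simp only [Nat.cast_add] at h'
              rw [hcastp] at h'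
              exact h'
            exact stmt16_thin hdet hγ hδ' hβ0 hξ0 hB1 hB2 Et Eu hnet hpow
              (neg_ne_zero.mpr one_ne_zero) hcast
          · have hsum2 : q.1 + q.2 + (p - 1) = σs := by
              rw [hσth, if_neg hlt] at hqsum; omega
            have hpow : ξ ^ q.1 * ξ ^ q.2 = ξ ^ σs := by
              rw [← hsum2, pow_add, pow_add, hξp1, mul_one]
            have hcast : (q.1 : ZMod p) + (q.2 : ZMod p) = (σs : ZMod p) + 1 := by
              have h' := congrArg (fun k : ℕ => (k : ZMod p)) hsum2
              simp only [Nat.cast_add] at h'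
              rw [hcastp] at h'
              linear_combination h'
            exact stmt16_thin hdet hγ hδ' hβ0 hξ0 hB1 hB2 Et Eu hnet hpow
              one_ne_zero hcast
        have hgσth : g σth = (SP.filter (fun q => q.1 + q.2 = σth)).card := rfl
        rw [hgσth, this, Finset.card_empty]
      -- sum bound
      have hσthmem : σth ∈ W.erase σs := Finset.mem_erase.mpr ⟨hσthne, hσthW⟩
      have hsum2 : ∑ σ ∈ W.erase σs, g σ = g σth + ∑ σ ∈ (W.erase σs).erase σth, g σ :=
        (Finset.add_sum_erase _ g hσthmem).symm
      have hrest : ∑ σ ∈ (W.erase σs).erase σth, g σ ≤ ((W.erase σs).erase σth).card := by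
        have h' := Finset.sum_le_card_nsmul ((W.erase σs).erase σth) g 1
          (fun σ hσ => hothers σ (Finset.mem_of_mem_erase hσ))
        rwa [smul_eq_mul, mul_one] at h'
      have hcard2 : ((W.erase σs).erase σth).card = 2 * p - 5 := by
        rw [Finset.card_erase_of_mem hσthmem, Finset.card_erase_of_mem hσsWmem, hWcard]
        omega
      have hkeyN : m2 + 9 ≤ 4 * p := by omega
      -- conclude
      have hcard0 : S0.card = n + 1 := by
        have h1 := Finset.card_erase_of_mem hz
        have h2 : 1 ≤ S0.card := Finset.card_pos.mpr ⟨0, hz⟩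
        omega
      rw [hcard0]
      have hkeyZ : (m2 : ℤ) + 9 ≤ 4 * (p : ℤ) := by exact_mod_cast hkeyN
      have hsq : ((n : ℤ)) ^ 2 = (m2 : ℤ) := by rw [hm2c]; ring
      calc (((n + 1 : ℕ) : ℤ) - 1) ^ 2 = ((n : ℤ)) ^ 2 := by push_cast; ring
        _ ≤ 4 * ((p : ℤ) - 2) := by linarith [hkeyZ, hsq]
    · -- z = 0
      have hrest : ∑ σ ∈ W.erase σs, g σ ≤ (W.erase σs).card := by
        have h' := Finset.sum_le_card_nsmul (W.erase σs) g 1 hothers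
        rwa [smul_eq_mul, mul_one] at h'
      have hcard2 : (W.erase σs).card = 2 * p - 4 := by
        rw [Finset.card_erase_of_mem hσsWmem, hWcard]; omega
      have hkeyN : m2 + 7 ≤ 4 * p := by omega
      have hcard0 : S0.card = n := by
        rw [hbij, Finset.erase_eq_of_notMem hz]
      rw [hcard0]
      have hkeyZ : (m2 : ℤ) + 7 ≤ 4 * (p : ℤ) := by exact_mod_cast hkeyN
      have hsq : ((n : ℤ) - 1) ^ 2 = (m2 : ℤ) - 2 * (n : ℤ) + 1 := by rw [hm2c]; ring
      rcases Nat.eq_zero_or_pos n with h0' | h1'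
      · rw [h0']
        norm_num
        linarith [hp3]
      · have hn1 : (1 : ℤ) ≤ (n : ℤ) := by exact_mod_cast h1'
        linarith [hkeyZ, hsq, hn1]
  · -- no bad slot
    push_neg at hbadex
    have hbound : ∀ σ ∈ W, g σ ≤ 1 := by
      intro σ hσ
      apply hcap
      intro hb
      exact (hbadex σ hσ hb.1) hb.2
    have hUb : SP.card ≤ W.card := by
      rw [hfiber]
      have h' := Finset.sum_le_card_nsmul W g 1 hbound
      rwa [smul_eq_mul, mul_one] at h'
    have hkeyN : m2 + n + 6 ≤ 4 * p := by omega
    by_cases hz : (0 : ZMod p) ∈ S0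
    · have hcard0 : S0.card = n + 1 := by
        have h1 := Finset.card_erase_of_mem hz
        have h2 : 1 ≤ S0.card := Finset.card_pos.mpr ⟨0, hz⟩
        omega
      rw [hcard0]
      rcases Nat.lt_or_ge n 2 with hn2 | hn2
      · interval_cases n
        · norm_num; linarith [hp3]
        · norm_num; linarith [hp3]
      · have hn2' : (2 : ℤ) ≤ (n : ℤ) := by exact_mod_cast hn2
        have hkeyZ : (m2 : ℤ) + (n : ℤ) + 6 ≤ 4 * (p : ℤ) := by exact_mod_cast hkeyN
        have hsq : ((n : ℤ)) ^ 2 = (m2 : ℤ) := by rw [hm2c]; ring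
        calc (((n + 1 : ℕ) : ℤ) - 1) ^ 2 = ((n : ℤ)) ^ 2 := by push_cast; ring
          _ ≤ 4 * ((p : ℤ) - 2) := by linarith [hkeyZ, hsq, hn2']
    · have hcard0 : S0.card = n := by
        rw [hbij, Finset.erase_eq_of_notMem hz]
      rw [hcard0]
      have hkeyZ : (m2 : ℤ) + (n : ℤ) + 6 ≤ 4 * (p : ℤ) := by exact_mod_cast hkeyN
      have hsq : ((n : ℤ) - 1) ^ 2 = (m2 : ℤ) - 2 * (n : ℤ) + 1 := by rw [hm2c]; ring
      rcases Nat.eq_zero_or_pos n with h0' | h1'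
      · rw [h0']
        norm_num
        linarith [hp3]
      · have hn1 : (1 : ℤ) ≤ (n : ℤ) := by exact_mod_cast h1'
        linarith [hkeyZ, hsq, hn1]
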